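/- Let W be nonnegative row-stochastic irreducible, T = diag(p₁,...,pₙ) with 0 < pᵢ ≤ 1, and for small σ > 0 define H(σ) = σ(I − (I−σT)W)⁻¹T. Then ‖H(σ)‖ is bounded as σ → 0⁺: there exist constants M > 0 and σ̄ > 0 such that ‖H(σ)‖ ≤ M for all σ ∈ (0, σ̄]. -/

import Mathlib

open Matrix

def MatIrreducible {n : ℕ} (W : Matrix (Fin n) (Fin n) ℝ) : Prop :=
  ∀ i j, ∃ k : ℕ, 0 < (W ^ k) i j

noncomputable def enorm {n : ℕ} (v : Fin n → ℝ) : ℝ :=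
  Real.sqrt (∑ i, (v i) ^ 2)

/-- Operator (spectral) norm induced by the Euclidean vector norm. -/
noncomputable def opNorm {n : ℕ} (A : Matrix (Fin n) (Fin n) ℝ) : ℝ :=
  sSup {r : ℝ | ∃ x : Fin n → ℝ, _root_.enorm x = 1 ∧ r = _root_.enorm (A *ᵥ x)}

/-- Sub-stochastic solve bound: if `x = A x + y` with `A` nonnegative and row sums ≤ c < 1,
then `‖x‖∞ ≤ K / (1 - c)` where `K` bounds `‖y‖∞`. -/
lemma aux_solve {n : ℕ} (hn : 0 < n) (A : Matrix (Fin n) (Fin n) ℝ) (c : ℝ) (hc : c < 1)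
    (hA : ∀ i j, 0 ≤ A i j) (hrow : ∀ i, ∑ j, A i j ≤ c)
    (x y : Fin n → ℝ) (hxy : ∀ i, x i = (A *ᵥ x) i + y i)
    (K : ℝ) (hy : ∀ i, |y i| ≤ K) : ∀ i, |x i| ≤ K / (1 - c) := by
  haveI : NeZero n := ⟨hn.ne'⟩
  have hne : (Finset.univ : Finset (Fin n)).Nonempty := Finset.univ_nonempty
  set m := Finset.univ.sup' hne (fun i => |x i|) with hm
  obtain ⟨i0, -, hi0⟩ := Finset.exists_mem_eq_sup' hne (fun i => |x i|)
  have hmle : ∀ j, |x j| ≤ m := fun j => Finset.le_sup' (fun i => |x i|) (Finset.mem_univ j)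
  have hm0 : 0 ≤ m := le_trans (abs_nonneg _) (hmle i0)
  have hmi : m = |x i0| := hm.trans hi0
  have h1 : m ≤ c * m + K := by
    calc m = |(A *ᵥ x) i0 + y i0| := by rw [hmi, hxy i0]
    _ ≤ |(A *ᵥ x) i0| + |y i0| := abs_add_le _ _
    _ ≤ (∑ j, A i0 j * |x j|) + K := by
        refine add_le_add ?_ (hy i0)
        calc |(A *ᵥ x) i0| = |∑ j, A i0 j * x j| := rfl
        _ ≤ ∑ j, |A i0 j * x j| := Finset.abs_sum_le_sum_abs _ _
        _ = ∑ j, A i0 j * |x j| := by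
            refine Finset.sum_congr rfl fun j _ => ?_
            rw [abs_mul, abs_of_nonneg (hA i0 j)]
    _ ≤ (∑ j, A i0 j * m) + K := by
        refine add_le_add_left (Finset.sum_le_sum fun j _ => ?_) K
        exact mul_le_mul_of_nonneg_left (hmle j) (hA i0 j)
    _ = (∑ j, A i0 j) * m + K := by rw [Finset.sum_mul]
    _ ≤ c * m + K := by
        exact add_le_add_left (mul_le_mul_of_nonneg_right (hrow i0) hm0) K
  have hKm : m * (1 - c) ≤ K := by nlinarith
  intro i
  calc |x i| ≤ m := hmle i
  _ ≤ K / (1 - c) := by rw [le_div_iff₀ (by linarith)]; linarith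

theorem stmt9 {n : ℕ} (W : Matrix (Fin n) (Fin n) ℝ) (p : Fin n → ℝ)
    (hWnn : ∀ i j, 0 ≤ W i j) (hWrs : ∀ i, ∑ j, W i j = 1)
    (hWirr : MatIrreducible W) (hp : ∀ i, 0 < p i ∧ p i ≤ 1) :
    ∃ M > (0 : ℝ), ∃ σbar > (0 : ℝ), ∀ σ : ℝ, 0 < σ → σ ≤ σbar →
      opNorm (σ • (1 - (1 - σ • Matrix.diagonal p) * W)⁻¹ * Matrix.diagonal p)
        ≤ M := by
  rcases Nat.eq_zero_or_pos n with hn | hn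
  · -- n = 0 : the supremum is over the empty set
    subst hn
    refine ⟨1, one_pos, 1, one_pos, fun σ _ _ => ?_⟩
    apply Real.sSup_le _ zero_le_one
    rintro r ⟨x, hx1, -⟩
    exfalso
    have : _root_.enorm x = 0 := by simp [_root_.enorm]
    rw [hx1] at this; norm_num at this
  · haveI : NeZero n := ⟨hn.ne'⟩
    have hne : (Finset.univ : Finset (Fin n)).Nonempty := Finset.univ_nonempty
    set pm := Finset.univ.inf' hne p with hpmdef
    obtain ⟨ip, -, hip⟩ := Finset.exists_mem_eq_inf' hne p
    have hpm0 : 0 < pm := by rw [hpmdef, hip]; exact (hp ip).1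
    have hpmle : ∀ j, pm ≤ p j := fun j => Finset.inf'_le _ (Finset.mem_univ j)
    have hpm1 : pm ≤ 1 := le_trans (hpmle ip) (hp ip).2
    refine ⟨(n : ℝ)^2 / pm + 1, by positivity, 1, one_pos, fun σ hσ0 hσ1 => ?_⟩
    set D := Matrix.diagonal p with hD
    set A := (1 - σ • D) * W with hA
    set B := (1 : Matrix (Fin n) (Fin n) ℝ) - A with hB
    -- entries of A
    have hAentry : ∀ i j, A i j = (1 - σ * p i) * W i j := by
      intro i j
      have : A = W - σ • (D * W) := by
        rw [hA, Matrix.sub_mul, Matrix.one_mul, Matrix.smul_mul]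
      rw [this]
      simp [hD, Matrix.diagonal_mul, Matrix.sub_apply, Matrix.smul_apply]
      ring
    have hAnn : ∀ i j, 0 ≤ A i j := by
      intro i j
      rw [hAentry]
      apply mul_nonneg _ (hWnn i j)
      nlinarith [(hp i).1, (hp i).2]
    set c := 1 - σ * pm with hc
    have hc1 : c < 1 := by
      have : 0 < σ * pm := mul_pos hσ0 hpm0
      rw [hc]; linarith
    have hArow : ∀ i, ∑ j, A i j ≤ c := by
      intro i
      have : ∑ j, A i j = (1 - σ * p i) * ∑ j, W i j := by
        rw [Finset.mul_sum]
        exact Finset.sum_congr rfl fun j _ => hAentry i j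
      rw [this, hWrs i, mul_one, hc]
      have := hpmle i
      nlinarith
    -- B is invertible
    have hBinj : Function.Injective B.mulVec := by
      intro u v huv
      have hsub : B *ᵥ (u - v) = 0 := by
        rw [Matrix.mulVec_sub, huv, sub_self]
      have hxy : ∀ i, (u - v) i = (A *ᵥ (u - v)) i + (0 : Fin n → ℝ) i := by
        intro i
        have := congrFun hsub i
        rw [hB, Matrix.sub_mulVec, Matrix.one_mulVec] at this
        simp only [Pi.sub_apply, Pi.zero_apply] at this ⊢
        linarith
      have hbound := aux_solve hn A c hc1 hAnn hArow (u - v) 0 hxy 0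
        (fun i => by simp)
      have : ∀ i, u i = v i := by
        intro i
        have h := hbound i
        rw [zero_div] at h
        have := abs_nonneg ((u - v) i)
        have h0 : |(u - v) i| = 0 := le_antisymm h this
        have := abs_eq_zero.mp h0
        simpa [sub_eq_zero] using this
      exact funext this
    have hBunit : IsUnit B := Matrix.mulVec_injective_iff_isUnit.mp hBinj
    have hBdet : IsUnit B.det := (Matrix.isUnit_iff_isUnit_det B).mp hBunit
    have hBB : B * B⁻¹ = 1 := Matrix.mul_nonsing_inv B hBdet
    -- entrywise bound on B⁻¹
    have hBinv : ∀ i j, |B⁻¹ i j| ≤ 1 / (σ * pm) := by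
      intro i j
      set y := B⁻¹ *ᵥ Pi.single j 1 with hy
      have hBy : B *ᵥ y = Pi.single j 1 := by
        rw [hy, Matrix.mulVec_mulVec, hBB, Matrix.one_mulVec]
      have hxy : ∀ i, y i = (A *ᵥ y) i + (Pi.single j 1 : Fin n → ℝ) i := by
        intro i
        have := congrFun hBy i
        rw [hB, Matrix.sub_mulVec, Matrix.one_mulVec] at this
        simp only [Pi.sub_apply] at this
        linarith
      have hbound := aux_solve hn A c hc1 hAnn hArow y _ hxy 1
        (fun i => by
          rcases eq_or_ne i j with h | h
          · subst h; simp
          · simp [Pi.single_apply, h])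
      have h1c : 1 - c = σ * pm := by rw [hc]; ring
      have := hbound i
      rw [h1c] at this
      have hyi : y i = B⁻¹ i j := by
        rw [hy, Matrix.mulVec_single]; simp
      rwa [hyi] at this
    -- entrywise bound on H
    set H := σ • B⁻¹ * D with hH
    have hHentry : ∀ i j, |H i j| ≤ 1 / pm := by
      intro i j
      have : H i j = σ * B⁻¹ i j * p j := by
        rw [hH, Matrix.mul_diagonal]
        simp [Matrix.smul_apply]
      rw [this, abs_mul, abs_mul, abs_of_pos hσ0, abs_of_pos (hp j).1]
      calc σ * |B⁻¹ i j| * p j ≤ σ * (1 / (σ * pm)) * 1 := by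
            apply mul_le_mul
            · exact mul_le_mul_of_nonneg_left (hBinv i j) hσ0.le
            · exact (hp j).2
            · exact (hp j).1.le
            · positivity
      _ = 1 / pm := by field_simp
    -- operator norm bound
    apply Real.sSup_le _ (by positivity)
    rintro r ⟨x, hx1, rfl⟩
    -- components of x are bounded by 1
    have hxsum : ∑ i, (x i) ^ 2 = 1 := by
      have h0 : 0 ≤ ∑ i, (x i) ^ 2 := Finset.sum_nonneg fun i _ => sq_nonneg _
      have := hx1
      rw [_root_.enorm] at this
      nlinarith [Real.sq_sqrt h0]
    have hxk : ∀ k, |x k| ≤ 1 := by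
      intro k
      have h1 : (x k) ^ 2 ≤ 1 := by
        rw [← hxsum]
        exact Finset.single_le_sum (fun i _ => sq_nonneg (x i)) (Finset.mem_univ k)
      nlinarith [sq_abs (x k), abs_nonneg (x k)]
    have hHx : ∀ i, |(H *ᵥ x) i| ≤ (n : ℝ) / pm := by
      intro i
      calc |(H *ᵥ x) i| = |∑ j, H i j * x j| := rfl
      _ ≤ ∑ j, |H i j * x j| := Finset.abs_sum_le_sum_abs _ _
      _ ≤ ∑ _j : Fin n, 1 / pm := by
          refine Finset.sum_le_sum fun j _ => ?_
          rw [abs_mul]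
          calc |H i j| * |x j| ≤ (1 / pm) * 1 :=
                mul_le_mul (hHentry i j) (hxk j) (abs_nonneg _) (by positivity)
          _ = 1 / pm := mul_one _
      _ = (n : ℝ) / pm := by
          rw [Finset.sum_const, Finset.card_univ, Fintype.card_fin]
          simp [div_eq_mul_inv]
    have hsum : ∑ i, ((H *ᵥ x) i) ^ 2 ≤ (n : ℝ) * ((n : ℝ) / pm) ^ 2 := by
      calc ∑ i, ((H *ᵥ x) i) ^ 2 ≤ ∑ _i : Fin n, ((n : ℝ) / pm) ^ 2 := by
            refine Finset.sum_le_sum fun i _ => ?_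
            nlinarith [hHx i, sq_abs ((H *ᵥ x) i), abs_nonneg ((H *ᵥ x) i)]
      _ = (n : ℝ) * ((n : ℝ) / pm) ^ 2 := by
          rw [Finset.sum_const, Finset.card_univ, Fintype.card_fin, nsmul_eq_mul]
    calc _root_.enorm (H *ᵥ x) = Real.sqrt (∑ i, ((H *ᵥ x) i) ^ 2) := rfl
    _ ≤ Real.sqrt (((n : ℝ)^2 / pm) ^ 2) := by
        apply Real.sqrt_le_sqrt
        calc ∑ i, ((H *ᵥ x) i) ^ 2 ≤ (n : ℝ) * ((n : ℝ) / pm) ^ 2 := hsum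
        _ ≤ ((n : ℝ)^2 / pm) ^ 2 := by
            have hn1 : (1 : ℝ) ≤ (n : ℝ) := by exact_mod_cast hn
            have : (n : ℝ) * ((n : ℝ) / pm) ^ 2 = (n : ℝ)^3 / pm^2 := by ring
            rw [this]
            have h34 : (n : ℝ)^3 ≤ (n : ℝ)^4 :=
              pow_le_pow_right₀ hn1 (by norm_num)
            rw [div_pow, div_le_div_iff₀ (by positivity) (by positivity)]
            nlinarith [mul_le_mul_of_nonneg_right h34 (sq_nonneg pm)]
    _ = (n : ℝ)^2 / pm := Real.sqrt_sq (by positivity)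
    _ ≤ (n : ℝ)^2 / pm + 1 := by linarith
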